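/- arXiv:1705.10826 — 2 statements merged into one kernel-verified Lean document; each statement's English description precedes it below -/
import Mathlib

section
/- Let K_{1,n} be the star with center r and n ≥ 1 leaves, in which every edge has weight l, with homebase r and invoking cost q satisfying 0 ≤ q < l. Then the minimum cost of an exploration strategy of K_{1,n} equals n·(q + l), whereas the minimum cost among exploration strategies using a single walk equals q + (2n − 1)·l. -/
open SimpleGraph

/-- An exploration strategy on a graph `G` from homebase `h`: a nonempty finite
family of walks, each starting at `h`, that together visit every vertex. -/
structure ExplStrategy {V : Type*} (G : SimpleGraph V) (h : V) where
  k : ℕ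
  kpos : 0 < k
  ends : Fin k → V
  walks : (i : Fin k) → G.Walk h (ends i)
  covers : ∀ v : V, ∃ i, v ∈ (walks i).support

/-- The weight of a walk: the sum of the weights of its edges, with multiplicity. -/
def walkWeight {V : Type*} {G : SimpleGraph V} (w : Sym2 V → ℝ) {a b : V}
    (p : G.Walk a b) : ℝ := (p.edges.map w).sum

/-- Cost of a strategy: `k·q` plus the total distance traversed. -/
noncomputable def stratCost {V : Type*} {G : SimpleGraph V} {h : V}
    (w : Sym2 V → ℝ) (q : ℝ) (S : ExplStrategy G h) : ℝ :=
  (S.k : ℝ) * q + ∑ i, walkWeight w (S.walks i)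

/-- The star `K_{1,n}`: center `none`, leaves `some i` for `i : Fin n`. -/
def starGraph (n : ℕ) : SimpleGraph (Option (Fin n)) :=
  SimpleGraph.fromRel (fun a _ => a = none)

lemma star_adj_none_some {n : ℕ} (i : Fin n) : (_root_.starGraph n).Adj none (some i) := by
  simp [_root_.starGraph, SimpleGraph.fromRel_adj]

lemma star_adj_cases {n : ℕ} {a b : Option (Fin n)} (h : (_root_.starGraph n).Adj a b) :
    a = none ∨ b = none := by
  simp only [_root_.starGraph, SimpleGraph.fromRel_adj] at h
  tauto

lemma walkWeight_const {n : ℕ} (l : ℝ) {a b : Option (Fin n)}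
    (p : (_root_.starGraph n).Walk a b) : walkWeight (fun _ => l) p = p.length * l := by
  simp [walkWeight, List.map_const', SimpleGraph.Walk.length_edges, mul_comm]

lemma star_walk_card {n : ℕ} {a b : Option (Fin n)} (p : (_root_.starGraph n).Walk a b) :
    2 * (Finset.univ.filter fun j => some j ∈ p.support).card ≤
      p.length + (if a = none then 1 else 2) := by
  induction p with
  | nil =>
    rename_i u
    cases u with
    | none => simp
    | some j =>
      simp [Finset.filter_eq']
  | @cons u v b hadj p ih =>
    rcases star_adj_cases hadj with hu | hv
    · -- u = none, so v ≠ none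
      subst hu
      have hv : v ≠ none := fun h => by simp [h] at hadj
      have hset : (Finset.univ.filter fun j => some j ∈ (SimpleGraph.Walk.cons hadj p).support)
          = (Finset.univ.filter fun j => some j ∈ p.support) := by
        ext x
        simp [SimpleGraph.Walk.support_cons]
      rw [hset, if_pos rfl]
      rw [if_neg hv] at ih
      simp only [SimpleGraph.Walk.length_cons]
      omega
    · -- v = none
      subst hv
      have hu : u ≠ none := fun h => by simp [h] at hadj
      obtain ⟨j, rfl⟩ := Option.ne_none_iff_exists'.mp hu
      have hsub : (Finset.univ.filter fun x => some x ∈ (SimpleGraph.Walk.cons hadj p).support)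
          ⊆ insert j (Finset.univ.filter fun x => some x ∈ p.support) := by
        intro x hx
        simp only [Finset.mem_filter, SimpleGraph.Walk.support_cons, List.mem_cons] at hx
        rcases hx.2 with h | h
        · simp [Option.some_inj.mp h]
        · simp [h]
      have hcard := Finset.card_le_card hsub
      have := Finset.card_insert_le j (Finset.univ.filter fun x => some x ∈ p.support)
      rw [if_pos rfl] at ih
      simp only [SimpleGraph.Walk.length_cons, if_neg (Option.some_ne_none j)]
      omega

def tour (n : ℕ) : (m : ℕ) → (hm : m < n) → (_root_.starGraph n).Walk (some ⟨m, hm⟩) none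
  | 0, hm => SimpleGraph.Walk.cons (star_adj_none_some ⟨0, hm⟩).symm SimpleGraph.Walk.nil
  | (m+1), hm => SimpleGraph.Walk.cons (star_adj_none_some ⟨m+1, hm⟩).symm
      (SimpleGraph.Walk.cons (star_adj_none_some ⟨m, Nat.lt_of_succ_lt hm⟩)
        (tour n m (Nat.lt_of_succ_lt hm)))

lemma tour_length (n : ℕ) : ∀ (m : ℕ) (hm : m < n), (tour n m hm).length = 2 * m + 1
  | 0, hm => by simp [tour]
  | (m+1), hm => by simp [tour, tour_length n m (Nat.lt_of_succ_lt hm)]; ring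

lemma tour_support (n : ℕ) : ∀ (m : ℕ) (hm : m < n) (v : Option (Fin n)),
    (∀ j : Fin n, v = some j → j.1 ≤ m) → v ∈ (tour n m hm).support
  | 0, hm, v, hv => by
    cases v with
    | none => simp [tour]
    | some j =>
      have := hv j rfl
      have : j = ⟨0, hm⟩ := Fin.ext (by show j.1 = 0; omega)
      simp [tour, this]
  | (m+1), hm, v, hv => by
    cases v with
    | none => simp [tour]
    | some j =>
      have hj := hv j rfl
      rcases Nat.lt_or_ge j.1 (m+1) with h | h
      · have := tour_support n m (Nat.lt_of_succ_lt hm) (some j) (by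
          intro j' hj'; cases hj'; omega)
        simp [tour]
        tauto
      · have : j = ⟨m+1, hm⟩ := Fin.ext (by show j.1 = m+1; omega)
        simp [tour, this]

lemma cost_ge {q l : ℝ} (hq : 0 ≤ q) (hql : q < l) (d len : ℕ) (h : 2 * d ≤ len + 1) :
    (d : ℝ) * (q + l) ≤ q + (len : ℝ) * l := by
  have hcast : 2 * (d : ℝ) ≤ (len : ℝ) + 1 := by exact_mod_cast h
  rcases Nat.eq_zero_or_pos d with h0 | h1
  · subst h0
    have hl : (0:ℝ) ≤ l := le_of_lt (lt_of_le_of_lt hq hql)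
    have h2 : (0:ℝ) ≤ (len : ℝ) * l := mul_nonneg (Nat.cast_nonneg _) hl
    push_cast
    linarith
  · have hd : (1:ℝ) ≤ (d : ℝ) := by exact_mod_cast h1
    have hl : (0:ℝ) ≤ l := le_of_lt (lt_of_le_of_lt hq hql)
    have h2 : (0:ℝ) ≤ ((len:ℝ) - (2*(d:ℝ) - 1)) * l := mul_nonneg (by linarith) hl
    nlinarith [mul_nonneg (sub_nonneg.mpr hd) (sub_nonneg.mpr hql.le)]

/-- For the star `K_{1,n}` (`n ≥ 1`) with all edge weights `l`, homebase at the
center and invoking cost `0 ≤ q < l`, the minimum exploration cost equals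
`n·(q + l)`, whereas the minimum cost among single-walk strategies equals
`q + (2n - 1)·l`. -/
theorem star_optimal_cost (n : ℕ) (hn : 1 ≤ n) (l q : ℝ) (hq : 0 ≤ q) (hql : q < l) :
    IsLeast {c : ℝ | ∃ S : ExplStrategy (_root_.starGraph n) none,
        stratCost (fun _ => l) q S = c} ((n : ℝ) * (q + l)) ∧
    IsLeast {c : ℝ | ∃ S : ExplStrategy (_root_.starGraph n) none,
        S.k = 1 ∧ stratCost (fun _ => l) q S = c} (q + (2 * (n : ℝ) - 1) * l) := by
  have hl : (0 : ℝ) ≤ l := le_of_lt (lt_of_le_of_lt hq hql)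
  have hn1 : n - 1 < n := by omega
  constructor
  · constructor
    · refine ⟨⟨n, hn, fun i => some i,
        fun i => SimpleGraph.Walk.cons (star_adj_none_some i) SimpleGraph.Walk.nil, ?_⟩, ?_⟩
      · intro v
        cases v with
        | none => exact ⟨⟨0, hn⟩, by simp⟩
        | some j => exact ⟨j, by simp⟩
      · simp only [stratCost, walkWeight_const, SimpleGraph.Walk.length_cons,
          SimpleGraph.Walk.length_nil, Finset.sum_const, Finset.card_univ,
          Fintype.card_fin, nsmul_eq_mul]
        push_cast
        ring
    · rintro c ⟨S, rfl⟩
      have key : ∀ i : Fin S.k,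
          ((Finset.univ.filter fun j => some j ∈ (S.walks i).support).card : ℝ) * (q + l)
            ≤ q + walkWeight (fun _ => l) (S.walks i) := by
        intro i
        rw [walkWeight_const]
        refine cost_ge hq hql _ _ ?_
        have := star_walk_card (S.walks i)
        simpa using this
      have hsub : (Finset.univ : Finset (Fin n)) ⊆
          Finset.univ.biUnion (fun i => Finset.univ.filter
            fun j => some j ∈ (S.walks i).support) := by
        intro j _
        obtain ⟨i, hi⟩ := S.covers (some j)
        exact Finset.mem_biUnion.mpr ⟨i, Finset.mem_univ i, by simp [hi]⟩
      have hsum : (n : ℝ) ≤ ∑ i : Fin S.k,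
          ((Finset.univ.filter fun j => some j ∈ (S.walks i).support).card : ℝ) := by
        have h1 := Finset.card_le_card hsub
        have h2 := Finset.card_biUnion_le (s := (Finset.univ : Finset (Fin S.k)))
          (t := fun i => Finset.univ.filter fun j => some j ∈ (S.walks i).support)
        have h3 : n ≤ ∑ i : Fin S.k,
            (Finset.univ.filter fun j => some j ∈ (S.walks i).support).card := by
          simpa using le_trans h1 h2
        exact_mod_cast h3
      calc (n : ℝ) * (q + l)
          ≤ (∑ i : Fin S.k,
            ((Finset.univ.filter fun j => some j ∈ (S.walks i).support).card : ℝ)) * (q + l) :=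
            mul_le_mul_of_nonneg_right hsum (by linarith)
        _ = ∑ i : Fin S.k,
            ((Finset.univ.filter fun j => some j ∈ (S.walks i).support).card : ℝ) * (q + l) :=
            Finset.sum_mul ..
        _ ≤ ∑ i : Fin S.k, (q + walkWeight (fun _ => l) (S.walks i)) :=
            Finset.sum_le_sum (fun i _ => key i)
        _ = stratCost (fun _ => l) q S := by
            simp [stratCost, Finset.sum_add_distrib, mul_comm]
  · constructor
    · refine ⟨⟨1, one_pos, fun _ => some ⟨n - 1, hn1⟩,
        fun _ => (tour n (n - 1) hn1).reverse, ?_⟩, rfl, ?_⟩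
      · intro v
        refine ⟨0, ?_⟩
        rw [SimpleGraph.Walk.support_reverse, List.mem_reverse]
        refine tour_support n (n - 1) hn1 v ?_
        rintro j rfl
        omega
      · simp only [stratCost, Fin.sum_univ_one, walkWeight_const,
          SimpleGraph.Walk.length_reverse, tour_length]
        have : ((2 * (n - 1) + 1 : ℕ) : ℝ) = 2 * (n : ℝ) - 1 := by
          have h4 : (2 * (n - 1) + 1 : ℕ) = 2 * n - 1 := by omega
          rw [h4]
          push_cast [Nat.cast_sub (by omega : 1 ≤ 2 * n)]
          ring
        rw [this]
        push_cast
        ring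
    · rintro c ⟨S, hk, rfl⟩
      have i0 : Fin S.k := ⟨0, S.kpos⟩
      have hall : ∀ v, v ∈ (S.walks i0).support := by
        intro v
        obtain ⟨i, hi⟩ := S.covers v
        have : i = i0 := Fin.ext (by have := i.isLt; omega)
        rwa [this] at hi
      have hfull : (Finset.univ.filter fun j => some j ∈ (S.walks i0).support) =
          Finset.univ := by
        ext j; simp [hall (some j)]
      have hcard := star_walk_card (S.walks i0)
      rw [hfull] at hcard
      simp only [Finset.card_univ, Fintype.card_fin, if_pos rfl] at hcard
      have hlen : (2 * (n : ℝ) - 1) ≤ ((S.walks i0).length : ℝ) := by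
        have : 2 * n ≤ (S.walks i0).length + 1 := hcard
        have := (Nat.cast_le (α := ℝ)).mpr this
        push_cast at this
        linarith
      have hsumeq : ∑ i : Fin S.k, walkWeight (fun _ => l) (S.walks i)
          = walkWeight (fun _ => l) (S.walks i0) := by
        refine Finset.sum_eq_single_of_mem i0 (Finset.mem_univ i0) ?_
        intro b _ hb
        exact absurd (Fin.ext (by have := b.isLt; omega)) hb
      rw [stratCost, hsumeq, hk, walkWeight_const]
      have : (2 * (n : ℝ) - 1) * l ≤ ((S.walks i0).length : ℝ) * l :=
        mul_le_mul_of_nonneg_right hlen hl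
      push_cast
      linarith
end

section
/- Fix an integer l ≥ 1 and integers l_1, …, l_l with 1 ≤ l_i ≤ l. Let T be the tree with unit edge weights consisting of a path from v_0 through v_1, …, v_l to v_{l+1}, in which consecutive vertices v_i and v_{i+1} are joined by a path of l unit-weight edges, together with, for each i ∈ {1, …, l}, a pendant path of l_i unit-weight edges attached at v_i and ending in a leaf u_i; the homebase is v_0 and the invoking cost is q ≥ 0. Then there exists an exploration strategy of T using a single walk whose cost is q + l² + l + 2·Σ_{i=1}^l l_i; in particular the minimum exploration cost of T is at most q + l² + l + 2·Σ_{i=1}^l l_i. -/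
open SimpleGraph

/-- Vertices of the tree of Section 6: a spine path of `l·(l+1)` unit edges with
spine positions `0, …, l·(l+1)` (the vertex `v_m` of the paper sits at position
`m·l`), together with, for each `i : Fin l`, a pendant path with vertices
`(i, 0), …, (i, l_i - 1)` attached at `v_{i+1}`. -/
abbrev CatV (l : ℕ) (li : Fin l → ℕ) : Type :=
  Fin (l * (l + 1) + 1) ⊕ ((i : Fin l) × Fin (li i))

/-- Generating relation for the tree: consecutive spine vertices are adjacent,
the pendant vertex `(i, 0)` is attached to the spine position `(i+1)·l` (the paper's
`v_{i+1}`), and consecutive pendant vertices are adjacent. -/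
def catRel (l : ℕ) (li : Fin l → ℕ) : CatV l li → CatV l li → Prop
  | Sum.inl a, Sum.inl b => (b : ℕ) = (a : ℕ) + 1
  | Sum.inl a, Sum.inr u => (a : ℕ) = ((u.1 : ℕ) + 1) * l ∧ (u.2 : ℕ) = 0
  | Sum.inr u, Sum.inr u' => u.1 = u'.1 ∧ (u'.2 : ℕ) = (u.2 : ℕ) + 1
  | Sum.inr _, Sum.inl _ => False

/-- The tree of Section 6, with unit edge weights. -/
def catGraph (l : ℕ) (li : Fin l → ℕ) : SimpleGraph (CatV l li) :=
  SimpleGraph.fromRel (catRel l li)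

namespace CatAux

variable {l : ℕ} {li : Fin l → ℕ}

lemma attach_le (i : ℕ) (hi : i < l) : (i+1) * l ≤ l * (l+1) :=
  le_trans (Nat.mul_le_mul_right _ hi) (Nat.mul_le_mul_left _ (Nat.le_succ _))

lemma spine_le (i : ℕ) (hi : i ≤ l) : i * l ≤ l * (l+1) :=
  le_trans (Nat.mul_le_mul_right _ hi) (Nat.mul_le_mul_left _ (Nat.le_succ _))

lemma adj_spine (a : ℕ) (h : a + 1 ≤ l * (l+1)) :
    (catGraph l li).Adj (Sum.inl ⟨a, by omega⟩) (Sum.inl ⟨a+1, by omega⟩) := by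
  rw [catGraph, fromRel_adj]
  exact ⟨by simp [Fin.ext_iff], Or.inl rfl⟩

lemma adj_attach (i : ℕ) (hi : i < l) (h0 : 0 < li ⟨i, hi⟩) :
    (catGraph l li).Adj (Sum.inl ⟨(i+1)*l, by have := attach_le (l:=l) i hi; omega⟩)
      (Sum.inr ⟨⟨i, hi⟩, ⟨0, h0⟩⟩) := by
  rw [catGraph, fromRel_adj]
  exact ⟨by simp, Or.inl ⟨rfl, rfl⟩⟩

lemma adj_pend (i : ℕ) (hi : i < l) (j : ℕ) (hj : j + 1 < li ⟨i, hi⟩) :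
    (catGraph l li).Adj (Sum.inr ⟨⟨i, hi⟩, ⟨j, by omega⟩⟩)
      (Sum.inr ⟨⟨i, hi⟩, ⟨j+1, hj⟩⟩) := by
  rw [catGraph, fromRel_adj]
  refine ⟨?_, Or.inl ⟨rfl, rfl⟩⟩
  intro h
  have := congrArg (fun v : CatV l li => match v with
    | Sum.inr u => (u.2 : ℕ) | Sum.inl _ => 0) h
  simp at this

def spineWalk (a : ℕ) (ha : a ≤ l*(l+1)) : (n : ℕ) → (h : a + n ≤ l * (l+1)) →
    (catGraph l li).Walk (Sum.inl ⟨a, by omega⟩) (Sum.inl ⟨a+n, by omega⟩)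
  | 0, _ => Walk.nil
  | n+1, h => (spineWalk a ha n (by omega)).append (adj_spine (a+n) (by omega)).toWalk

lemma spineWalk_length (a : ℕ) (ha : a ≤ l*(l+1)) : ∀ (n : ℕ) (h : a + n ≤ l*(l+1)),
    (spineWalk (li := li) a ha n h).length = n
  | 0, _ => rfl
  | n+1, h => by
      simp [spineWalk, spineWalk_length a ha n]

lemma spineWalk_support (a : ℕ) (ha : a ≤ l*(l+1)) :
    ∀ (n : ℕ) (h : a + n ≤ l*(l+1)) (m : ℕ), a ≤ m → m ≤ a + n →
      ∀ (pf : m < l*(l+1)+1),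
      Sum.inl ⟨m, pf⟩ ∈ (spineWalk (li := li) a ha n h).support
  | 0, _, m, h1, h2, pf => by
      have hm : m = a := by omega
      subst hm
      simp [spineWalk]
  | n+1, h, m, h1, h2, pf => by
      rw [spineWalk, Walk.mem_support_append_iff]
      rcases Nat.lt_or_ge m (a+n+1) with hm | hm
      · exact Or.inl (spineWalk_support a ha n (by omega) m h1 (by omega) pf)
      · have hm' : m = a+n+1 := by omega
        subst hm'
        exact Or.inr (Walk.end_mem_support _)

def pendWalk (i : ℕ) (hi : i < l) : (j : ℕ) → (hj : j < li ⟨i, hi⟩) →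
    (catGraph l li).Walk (Sum.inl ⟨(i+1)*l, by have := attach_le (l:=l) i hi; omega⟩)
      (Sum.inr ⟨⟨i, hi⟩, ⟨j, hj⟩⟩)
  | 0, hj => (adj_attach i hi hj).toWalk
  | j+1, hj => (pendWalk i hi j (by omega)).append (adj_pend i hi j hj).toWalk

lemma pendWalk_length (i : ℕ) (hi : i < l) : ∀ (j : ℕ) (hj : j < li ⟨i, hi⟩),
    (pendWalk i hi j hj).length = j + 1
  | 0, _ => rfl
  | j+1, hj => by simp [pendWalk, pendWalk_length i hi j]

lemma pendWalk_support (i : ℕ) (hi : i < l) : ∀ (j : ℕ) (hj : j < li ⟨i, hi⟩)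
    (j' : ℕ), j' ≤ j → ∀ (pf : j' < li ⟨i, hi⟩),
    Sum.inr ⟨⟨i, hi⟩, ⟨j', pf⟩⟩ ∈ (pendWalk i hi j hj).support
  | 0, hj, j', hj', pf => by
      have : j' = 0 := by omega
      subst this
      exact Walk.end_mem_support _
  | j+1, hj, j', hj', pf => by
      rw [pendWalk, Walk.mem_support_append_iff]
      rcases Nat.lt_or_ge j' (j+1) with hm | hm
      · exact Or.inl (pendWalk_support i hi j (by omega) j' (by omega) pf)
      · have : j' = j+1 := by omega
        subst this
        exact Or.inr (Walk.end_mem_support _)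

def pendTrip (i : ℕ) (hi : i < l) (h0 : 0 < li ⟨i, hi⟩) :
    (catGraph l li).Walk (Sum.inl ⟨(i+1)*l, by have := attach_le (l:=l) i hi; omega⟩)
      (Sum.inl ⟨(i+1)*l, by have := attach_le (l:=l) i hi; omega⟩) :=
  (pendWalk i hi (li ⟨i,hi⟩ - 1) (by omega)).append
    (pendWalk i hi (li ⟨i,hi⟩ - 1) (by omega)).reverse

lemma pendTrip_length (i : ℕ) (hi : i < l) (h0 : 0 < li ⟨i, hi⟩) :
    (pendTrip i hi h0).length = 2 * li ⟨i, hi⟩ := by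
  simp [pendTrip, pendWalk_length]
  omega

lemma pendTrip_support (i : ℕ) (hi : i < l) (h0 : 0 < li ⟨i, hi⟩)
    (j : ℕ) (pf : j < li ⟨i, hi⟩) :
    Sum.inr ⟨⟨i, hi⟩, ⟨j, pf⟩⟩ ∈ (pendTrip i hi h0).support := by
  rw [pendTrip, Walk.mem_support_append_iff]
  exact Or.inl (pendWalk_support i hi _ _ j (by omega) pf)

def gfun (li : Fin l → ℕ) : ℕ → ℕ := fun k => if h : k < l then li ⟨k, h⟩ else 0

def seg (i : ℕ) (hi : i + 1 ≤ l) :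
    (catGraph l li).Walk (Sum.inl ⟨i*l, by have := spine_le (l:=l) i (by omega); omega⟩)
      (Sum.inl ⟨(i+1)*l, by have := spine_le (l:=l) (i+1) hi; omega⟩) :=
  (spineWalk (i*l) (spine_le i (by omega)) l
      (by have := spine_le (l:=l) (i+1) hi;
          have h2 : (i+1)*l = i*l + l := Nat.succ_mul i l; omega)).copy rfl
    (congrArg Sum.inl (Fin.ext (Nat.succ_mul i l).symm))

lemma seg_length (i : ℕ) (hi : i + 1 ≤ l) : (seg (li := li) i hi).length = l := by
  simp [seg, spineWalk_length]

def route (hl1 : ∀ i, 1 ≤ li i) : (i : ℕ) → (hi : i ≤ l) →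
    (catGraph l li).Walk (Sum.inl ⟨0, by omega⟩)
      (Sum.inl ⟨i*l, by have := spine_le (l:=l) i hi; omega⟩)
  | 0, _ => Walk.nil.copy rfl (congrArg Sum.inl (Fin.ext (Nat.zero_mul l).symm))
  | i+1, hi =>
      (route hl1 i (by omega)).append
        ((seg i hi).append (pendTrip i (by omega) (hl1 _)))

lemma route_length (hl1 : ∀ i, 1 ≤ li i) : ∀ (i : ℕ) (hi : i ≤ l),
    (route hl1 i hi).length = i * l + 2 * ∑ k ∈ Finset.range i, gfun li k
  | 0, _ => by rw [route, Walk.length_copy]; simp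
  | i+1, hi => by
      have hil : i < l := hi
      rw [route, Walk.length_append, Walk.length_append, route_length hl1 i]
      simp [route, route_length hl1 i, seg_length, pendTrip_length,
        Finset.sum_range_succ, gfun, hil]
      ring

lemma route_support_spine (hl1 : ∀ i, 1 ≤ li i) : ∀ (i : ℕ) (hi : i ≤ l)
    (m : ℕ), m ≤ i * l → ∀ (pf : m < l*(l+1)+1),
    Sum.inl ⟨m, pf⟩ ∈ (route hl1 i hi).support
  | 0, _, m, hm, pf => by
      have : m = 0 := by omega
      subst this
      simp [route]
  | i+1, hi, m, hm, pf => by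
      rw [route, Walk.mem_support_append_iff]
      rcases Nat.lt_or_ge m (i*l+1) with h | h
      · exact Or.inl (route_support_spine hl1 i (by omega) m (by omega) pf)
      · right
        rw [Walk.mem_support_append_iff]
        left
        rw [seg, Walk.support_copy]
        exact spineWalk_support (i*l) _ l _ m (by omega)
          (by have : (i+1)*l = i*l + l := by ring
              omega) pf

lemma route_support_pend (hl1 : ∀ i, 1 ≤ li i) : ∀ (i : ℕ) (hi : i ≤ l)
    (i' : ℕ) (hi' : i' < l), i' < i → ∀ (j : ℕ) (pfj : j < li ⟨i', hi'⟩),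
    Sum.inr ⟨⟨i', hi'⟩, ⟨j, pfj⟩⟩ ∈ (route hl1 i hi).support
  | 0, _, i', hi', hlt, j, pfj => by omega
  | i+1, hi, i', hi', hlt, j, pfj => by
      rw [route, Walk.mem_support_append_iff]
      rcases Nat.lt_or_ge i' i with h | h
      · exact Or.inl (route_support_pend hl1 i (by omega) i' hi' h j pfj)
      · have : i' = i := by omega
        subst this
        right
        rw [Walk.mem_support_append_iff]
        right
        exact pendTrip_support i' hi' _ j pfj

lemma mul_succ_eq : l*(l+1) = l*l + l := Nat.mul_succ l l

def finalSeg (hl : 1 ≤ l) :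
    (catGraph l li).Walk (Sum.inl ⟨l*l, by have := mul_succ_eq (l:=l); omega⟩)
      (Sum.inl ⟨l*(l+1), by omega⟩) :=
  (spineWalk (l*l) (by have := mul_succ_eq (l:=l); omega) l
      (by have := mul_succ_eq (l:=l); omega)).copy rfl
    (congrArg Sum.inl (Fin.ext (mul_succ_eq (l:=l)).symm))

lemma finalSeg_length (hl : 1 ≤ l) : (finalSeg (li := li) hl).length = l := by
  simp [finalSeg, spineWalk_length]

def fullWalk (hl : 1 ≤ l) (hl1 : ∀ i, 1 ≤ li i) :
    (catGraph l li).Walk (Sum.inl 0) (Sum.inl ⟨l*(l+1), by omega⟩) :=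
  ((route hl1 l le_rfl).append (finalSeg hl)).copy
    (congrArg Sum.inl (Fin.ext (by simp))) rfl

lemma fullWalk_length (hl : 1 ≤ l) (hl1 : ∀ i, 1 ≤ li i) :
    (fullWalk hl hl1).length = l*l + l + 2 * ∑ k ∈ Finset.range l, gfun li k := by
  rw [fullWalk, Walk.length_copy, Walk.length_append, route_length]
  simp [fullWalk, route_length, finalSeg_length]
  ring

lemma fullWalk_support (hl : 1 ≤ l) (hl1 : ∀ i, 1 ≤ li i) (v : CatV l li) :
    v ∈ (fullWalk hl hl1).support := by
  rw [fullWalk, Walk.support_copy, Walk.mem_support_append_iff]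
  match v with
  | Sum.inl m =>
      rcases Nat.lt_or_ge (m : ℕ) (l*l + 1) with h | h
      · left
        have : (Sum.inl ⟨(m : ℕ), m.isLt⟩ : CatV l li) ∈
            (route hl1 l le_rfl).support :=
          route_support_spine hl1 l le_rfl (m : ℕ) (by omega) m.isLt
        simpa using this
      · right
        rw [finalSeg, Walk.support_copy]
        have hm2 : (m : ℕ) ≤ l*l + l := by
          have := m.isLt
          have := mul_succ_eq (l:=l)
          omega
        have : (Sum.inl ⟨(m : ℕ), m.isLt⟩ : CatV l li) ∈
            (spineWalk (l*l) (by have := mul_succ_eq (l:=l); omega) l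
              (by have := mul_succ_eq (l:=l); omega)).support :=
          spineWalk_support (l*l) _ l _ (m : ℕ) (by omega) hm2 m.isLt
        simpa using this
  | Sum.inr ⟨i, j⟩ =>
      left
      have : (Sum.inr ⟨⟨(i:ℕ), i.isLt⟩, ⟨(j:ℕ), by simpa using j.isLt⟩⟩ : CatV l li) ∈
          (route hl1 l le_rfl).support :=
        route_support_pend hl1 l le_rfl (i:ℕ) i.isLt i.isLt (j:ℕ) (by simpa using j.isLt)
      simpa using this

lemma gfun_sum : ∑ k ∈ Finset.range l, gfun li k = ∑ i : Fin l, li i := by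
  rw [← Fin.sum_univ_eq_sum_range]
  exact Finset.sum_congr rfl (fun i _ => by simp [gfun, i.isLt])

end CatAux

/-- For the tree `T` of Section 6 (spine `v_0, …, v_{l+1}` with consecutive `v_i`
joined by paths of `l` unit edges, and a pendant path of `l_i` unit edges ending in
the leaf `u_i` attached at each `v_i`, `1 ≤ l_i ≤ l`), homebase `v_0` and invoking
cost `q ≥ 0`, there is a single-walk exploration strategy of cost
`q + l² + l + 2·Σ_i l_i`; in particular the minimum exploration cost is at most
`q + l² + l + 2·Σ_i l_i`. -/
theorem cat_tree_single_walk_cost (l : ℕ) (hl : 1 ≤ l) (li : Fin l → ℕ)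
    (hli : ∀ i, 1 ≤ li i ∧ li i ≤ l) (q : ℝ) (hq : 0 ≤ q) :
    (∃ S : ExplStrategy (catGraph l li) (Sum.inl 0), S.k = 1 ∧
        stratCost (fun _ => 1) q S =
          q + (l : ℝ) ^ 2 + (l : ℝ) + 2 * ∑ i, (li i : ℝ)) ∧
    sInf {c : ℝ | ∃ S : ExplStrategy (catGraph l li) (Sum.inl 0),
        stratCost (fun _ => 1) q S = c}
      ≤ q + (l : ℝ) ^ 2 + (l : ℝ) + 2 * ∑ i, (li i : ℝ) := by
  classical
  have hl1 : ∀ i, 1 ≤ li i := fun i => (hli i).1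
  have hww : ∀ {a b : CatV l li} (p : (catGraph l li).Walk a b),
      walkWeight (fun _ => (1:ℝ)) p = p.length := by
    intro a b p
    simp [walkWeight, List.map_const', List.sum_replicate]
  refine ⟨⟨⟨1, one_pos, fun _ => Sum.inl ⟨l*(l+1), by omega⟩,
      fun _ => CatAux.fullWalk hl hl1,
      fun v => ⟨0, CatAux.fullWalk_support hl hl1 v⟩⟩, rfl, ?_⟩, ?_⟩
  · simp only [stratCost, Fin.sum_univ_one, hww, CatAux.fullWalk_length hl hl1,
      CatAux.gfun_sum, Nat.cast_one]
    push_cast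
    ring
  · have hbdd : BddBelow {c : ℝ | ∃ S : ExplStrategy (catGraph l li) (Sum.inl 0),
        stratCost (fun _ => 1) q S = c} := by
      refine ⟨0, fun c hc => ?_⟩
      obtain ⟨S, rfl⟩ := hc
      have h1 : ∀ i, (0:ℝ) ≤ walkWeight (fun _ => (1:ℝ)) (S.walks i) := fun i => by
        rw [hww]; positivity
      exact add_nonneg (mul_nonneg (Nat.cast_nonneg _) hq)
        (Finset.sum_nonneg fun i _ => h1 i)
    refine csInf_le hbdd ?_
    refine ⟨⟨1, one_pos, fun _ => Sum.inl ⟨l*(l+1), by omega⟩,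
      fun _ => CatAux.fullWalk hl hl1,
      fun v => ⟨0, CatAux.fullWalk_support hl hl1 v⟩⟩, ?_⟩
    simp only [stratCost, Fin.sum_univ_one, hww, CatAux.fullWalk_length hl hl1,
      CatAux.gfun_sum, Nat.cast_one]
    push_cast
    ring
end
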